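/- For a Hermitian matrix H with ‖H‖ ≤ 1, the unitary dilation satisfies [[H, √(I−H²)], [√(I−H²), −H]] = (σ_z ⊗ I) · exp(i σ_y ⊗ arccos(H)), where arccos is applied via the functional calculus. -/

import Mathlib

open Matrix
open scoped ComplexOrder

section AuxStmt14

variable {n : ℕ}

private lemma aux_conj14 (U X Y : Matrix (Fin n) (Fin n) ℂ) :
    fromBlocks U U (Complex.I • U) (-(Complex.I • U)) * fromBlocks X 0 0 Y *
      ((2:ℂ)⁻¹ • fromBlocks (star U) (-(Complex.I • star U)) (star U) (Complex.I • star U)) =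
    fromBlocks ((2:ℂ)⁻¹ • (U*X*star U + U*Y*star U))
      ((2:ℂ)⁻¹ • (Complex.I • (U*Y*star U) - Complex.I • (U*X*star U)))
      ((2:ℂ)⁻¹ • (Complex.I • (U*X*star U) - Complex.I • (U*Y*star U)))
      ((2:ℂ)⁻¹ • (U*X*star U + U*Y*star U)) := by
  rw [Matrix.mul_smul, Matrix.fromBlocks_multiply, Matrix.fromBlocks_multiply,
    Matrix.fromBlocks_smul]
  rw [Matrix.fromBlocks_inj]
  refine ⟨?_, ?_, ?_, ?_⟩ <;> simp only [Matrix.mul_smul, Matrix.smul_mul, Matrix.neg_mul,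
    Matrix.mul_neg, Matrix.mul_zero, Matrix.zero_mul, add_zero, zero_add, Matrix.mul_assoc,
    smul_neg, neg_smul, neg_neg, smul_smul, Complex.I_mul_I] <;> module

private lemma aux_left_inv14 (U : Matrix (Fin n) (Fin n) ℂ)
    (hUU : star U * U = 1) :
    ((2:ℂ)⁻¹ • fromBlocks (star U) (-(Complex.I • star U)) (star U) (Complex.I • star U)) *
      fromBlocks U U (Complex.I • U) (-(Complex.I • U)) = 1 := by
  rw [Matrix.smul_mul, Matrix.fromBlocks_multiply]
  simp only [Matrix.mul_smul, Matrix.smul_mul, Matrix.neg_mul, Matrix.mul_neg, hUU, smul_smul,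
    Complex.I_mul_I, smul_neg, neg_neg, neg_smul, one_smul, neg_one_smul]
  have h2 : (1:Matrix (Fin n) (Fin n) ℂ) + 1 = (2:ℂ) • 1 := by module
  have h0 : (1:Matrix (Fin n) (Fin n) ℂ) + -1 = 0 := by module
  rw [h2, h0, Matrix.fromBlocks_smul, smul_smul]
  norm_num

private lemma aux_right_inv14 (U : Matrix (Fin n) (Fin n) ℂ)
    (hUU' : U * star U = 1) :
    fromBlocks U U (Complex.I • U) (-(Complex.I • U)) *
      ((2:ℂ)⁻¹ • fromBlocks (star U) (-(Complex.I • star U)) (star U) (Complex.I • star U))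
      = 1 := by
  rw [Matrix.mul_smul, Matrix.fromBlocks_multiply]
  simp only [Matrix.mul_smul, Matrix.smul_mul, Matrix.neg_mul, Matrix.mul_neg, hUU', smul_smul,
    Complex.I_mul_I, smul_neg, neg_neg, neg_smul, one_smul, neg_one_smul]
  have h2 : (1:Matrix (Fin n) (Fin n) ℂ) + 1 = (2:ℂ) • 1 := by module
  have hA : -(Complex.I • (1:Matrix (Fin n) (Fin n) ℂ)) + Complex.I • 1 = 0 := by module
  have hB : Complex.I • (1:Matrix (Fin n) (Fin n) ℂ) + -(Complex.I • 1) = 0 := by module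
  rw [h2, hA, hB, Matrix.fromBlocks_smul, smul_smul]
  norm_num

private lemma key_smul14 (U : Matrix (Fin n) (Fin n) ℂ) (b : ℂ) (d : Fin n → ℂ) :
    b • (U * diagonal d * star U) = U * diagonal (b • d) * star U := by
  rw [Matrix.diagonal_smul, Matrix.mul_smul, Matrix.smul_mul]

private lemma diag_comb14 (U : Matrix (Fin n) (Fin n) ℂ) (a : ℂ) (f g h : Fin n → ℂ)
    (hfg : ∀ i, a * (f i + g i) = h i) :
    a • (U * diagonal f * star U + U * diagonal g * star U) = U * diagonal h * star U := by
  have e1 : U * diagonal f * star U + U * diagonal g * star U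
      = U * (diagonal f + diagonal g) * star U := by
    rw [Matrix.mul_add, Matrix.add_mul]
  rw [e1, Matrix.diagonal_add, key_smul14]
  have : a • (fun i => f i + g i) = h := funext fun i => by
    simpa [smul_eq_mul] using hfg i
  rw [this]

private lemma diag_comb14' (U : Matrix (Fin n) (Fin n) ℂ) (a : ℂ) (f g h : Fin n → ℂ)
    (hfg : ∀ i, a * (Complex.I * g i - Complex.I * f i) = h i) :
    a • (Complex.I • (U * diagonal g * star U) - Complex.I • (U * diagonal f * star U))
      = U * diagonal h * star U := by
  rw [key_smul14, key_smul14]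
  have e1 : U * diagonal (Complex.I • g) * star U - U * diagonal (Complex.I • f) * star U
      = U * (diagonal (Complex.I • g) - diagonal (Complex.I • f)) * star U := by
    rw [Matrix.mul_sub, Matrix.sub_mul]
  rw [e1, Matrix.diagonal_sub, key_smul14]
  have : a • (fun i => (Complex.I • g) i - (Complex.I • f) i) = h := funext fun i => by
    simpa [smul_eq_mul] using hfg i
  rw [this]

private lemma conj_mul14 (U : Matrix (Fin n) (Fin n) ℂ) (hUU : star U * U = 1)
    (f g : Fin n → ℂ) :
    (U * diagonal f * star U) * (U * diagonal g * star U)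
      = U * diagonal (fun i => f i * g i) * star U := by
  calc (U * diagonal f * star U) * (U * diagonal g * star U)
      = U * (diagonal f * ((star U * U) * (diagonal g * star U))) := by
        simp only [Matrix.mul_assoc]
    _ = U * (diagonal f * (diagonal g * star U)) := by rw [hUU, Matrix.one_mul]
    _ = U * diagonal (fun i => f i * g i) * star U := by
        simp only [← Matrix.mul_assoc, Matrix.diagonal_mul_diagonal]

private lemma scalar_cos14 (x : ℝ) :
    (2:ℂ)⁻¹ * (Complex.exp ((x:ℂ) * Complex.I) + Complex.exp (-((x:ℂ) * Complex.I)))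
      = (Real.cos x : ℂ) := by
  rw [show -((x:ℂ) * Complex.I) = ((-x : ℂ)) * Complex.I by ring, Complex.exp_mul_I,
    Complex.exp_mul_I, Complex.cos_neg, Complex.sin_neg, ← Complex.ofReal_cos,
    ← Complex.ofReal_sin]
  ring

private lemma scalar_sin14 (x : ℝ) :
    (2:ℂ)⁻¹ * (Complex.I * Complex.exp (-((x:ℂ) * Complex.I))
      - Complex.I * Complex.exp ((x:ℂ) * Complex.I)) = (Real.sin x : ℂ) := by
  rw [show -((x:ℂ) * Complex.I) = ((-x : ℂ)) * Complex.I by ring, Complex.exp_mul_I,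
    Complex.exp_mul_I, Complex.cos_neg, Complex.sin_neg, ← Complex.ofReal_cos,
    ← Complex.ofReal_sin]
  linear_combination (-(Real.sin x : ℂ)) * Complex.I_sq

private lemma scalar_sin14' (x : ℝ) :
    (2:ℂ)⁻¹ * (Complex.I * Complex.exp ((x:ℂ) * Complex.I)
      - Complex.I * Complex.exp (-((x:ℂ) * Complex.I))) = -(Real.sin x : ℂ) := by
  rw [show -((x:ℂ) * Complex.I) = ((-x : ℂ)) * Complex.I by ring, Complex.exp_mul_I,
    Complex.exp_mul_I, Complex.cos_neg, Complex.sin_neg, ← Complex.ofReal_cos,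
    ← Complex.ofReal_sin]
  linear_combination (Real.sin x : ℂ) * Complex.I_sq

end AuxStmt14

/-- For a Hermitian matrix `H` with `‖H‖ ≤ 1`, with `S = √(I − H²)` the PSD square
root and `C = arccos(H)` defined by the spectral functional calculus, the unitary
dilation satisfies `[[H, S], [S, −H]] = (σ_z ⊗ I) · exp(i σ_y ⊗ C)`. -/
theorem stmt14 {n : ℕ} (H : Matrix (Fin n) (Fin n) ℂ) (hH : H.IsHermitian)
    (hnorm : ∀ x : EuclideanSpace ℂ (Fin n), ‖Matrix.toEuclideanLin H x‖ ≤ ‖x‖)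
    (S : Matrix (Fin n) (Fin n) ℂ) (hS : S.PosSemidef) (hS2 : S * S = 1 - H * H)
    (C : Matrix (Fin n) (Fin n) ℂ)
    (hC : C = (hH.eigenvectorUnitary : Matrix (Fin n) (Fin n) ℂ) *
      Matrix.diagonal (fun i => (Real.arccos (hH.eigenvalues i) : ℂ)) *
      star (hH.eigenvectorUnitary : Matrix (Fin n) (Fin n) ℂ)) :
    Matrix.fromBlocks H S S (-H) =
      Matrix.fromBlocks (1 : Matrix (Fin n) (Fin n) ℂ) 0 0 (-1) *
        NormedSpace.exp
          (Complex.I • Matrix.fromBlocks 0 ((-Complex.I) • C) (Complex.I • C) 0) := by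
  classical
  obtain ⟨hUU, hUU'⟩ := Unitary.mem_iff.mp hH.eigenvectorUnitary.2
  set U : Matrix (Fin n) (Fin n) ℂ := (hH.eigenvectorUnitary : Matrix (Fin n) (Fin n) ℂ)
    with hUdef
  -- eigenvalue bounds
  have hev : ∀ i, |hH.eigenvalues i| ≤ 1 := by
    intro i
    have hv := hH.mulVec_eigenvectorBasis i
    have hb : ‖hH.eigenvectorBasis i‖ = 1 := hH.eigenvectorBasis.orthonormal.1 i
    have hthis := hnorm (hH.eigenvectorBasis i)
    rw [Matrix.toEuclideanLin_apply, hb] at hthis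
    have h2 : (WithLp.equiv 2 (Fin n → ℂ)) (hH.eigenvectorBasis i)
        = ⇑(hH.eigenvectorBasis i) := rfl
    rw [hv] at hthis
    have h3 : WithLp.toLp 2 ((hH.eigenvalues i) • (hH.eigenvectorBasis i).ofLp)
        = (hH.eigenvalues i) • (hH.eigenvectorBasis i) := rfl
    rw [h3, norm_smul, hb, mul_one, Real.norm_eq_abs] at hthis
    exact hthis
  have hcosθ : ∀ i, Real.cos (Real.arccos (hH.eigenvalues i)) = hH.eigenvalues i := fun i =>
    Real.cos_arccos (abs_le.mp (hev i)).1 (abs_le.mp (hev i)).2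
  have hsinθ : ∀ i, 0 ≤ Real.sin (Real.arccos (hH.eigenvalues i)) := fun i =>
    Real.sin_nonneg_of_nonneg_of_le_pi (Real.arccos_nonneg _) (Real.arccos_le_pi _)
  -- spectral theorem
  have hspec : H = U * diagonal (fun i => (hH.eigenvalues i : ℂ)) * star U := by
    exact hH.spectral_theorem
  -- sin matrix
  set sinM : Matrix (Fin n) (Fin n) ℂ :=
    U * diagonal (fun i => ((Real.sin (Real.arccos (hH.eigenvalues i)) : ℝ) : ℂ)) * star U
    with hsinMdef
  have hsinPSD : sinM.PosSemidef := by
    rw [hsinMdef, Matrix.star_eq_conjTranspose]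
    exact (Matrix.posSemidef_diagonal_iff.mpr fun i => by
      simpa using Complex.zero_le_real.mpr (hsinθ i)).mul_mul_conjTranspose_same U
  have hHH : H * H
      = U * diagonal (fun i => (hH.eigenvalues i : ℂ) * (hH.eigenvalues i : ℂ)) * star U := by
    conv_lhs => rw [hspec]
    exact conj_mul14 U hUU _ _
  have e2 : (1 : Matrix (Fin n) (Fin n) ℂ) - H * H
      = U * diagonal (fun i => 1 - (hH.eigenvalues i : ℂ) * (hH.eigenvalues i : ℂ)) * star U := by
    have h1 : (1:Matrix (Fin n) (Fin n) ℂ) = U * diagonal (fun _ : Fin n => (1:ℂ)) * star U := by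
      rw [Matrix.diagonal_one, Matrix.mul_one, hUU']
    rw [hHH, ← Matrix.diagonal_sub, Matrix.mul_sub, Matrix.sub_mul, ← h1]
  have hsinsq : sinM * sinM = 1 - H * H := by
    rw [hsinMdef, conj_mul14 U hUU _ _, e2]
    refine congrArg (fun d => U * diagonal d * star U) (funext fun i => ?_)
    have hre : Real.sin (Real.arccos (hH.eigenvalues i)) * Real.sin (Real.arccos (hH.eigenvalues i))
        = 1 - hH.eigenvalues i * hH.eigenvalues i := by
      have h := Real.sin_sq_add_cos_sq (Real.arccos (hH.eigenvalues i))
      rw [hcosθ i] at h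
      linear_combination h
    exact_mod_cast congrArg Complex.ofReal hre
  -- S equals sin matrix
  have hP : (1 - H * H).PosSemidef := by
    rw [← hS2]
    nth_rewrite 1 [← hS.isHermitian.eq]
    exact Matrix.posSemidef_conjTranspose_mul_self S
  have hSeq : S = sinM := by
    open scoped MatrixOrder Matrix.Norms.L2Operator in
    exact (CFC.sq_eq_sq_iff S sinM hS.nonneg hsinPSD.nonneg).mp
      (by rw [pow_two, pow_two, hS2, hsinsq])
  -- the exponential
  set V : Matrix (Fin n ⊕ Fin n) (Fin n ⊕ Fin n) ℂ :=
    fromBlocks U U (Complex.I • U) (-(Complex.I • U)) with hVdef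
  set Vinv : Matrix (Fin n ⊕ Fin n) (Fin n ⊕ Fin n) ℂ :=
    (2:ℂ)⁻¹ • fromBlocks (star U) (-(Complex.I • star U)) (star U) (Complex.I • star U)
    with hVinvdef
  have hVinvV : Vinv * V = 1 := aux_left_inv14 U hUU
  have hVVinv : V * Vinv = 1 := aux_right_inv14 U hUU'
  have hVunit : IsUnit V := ⟨⟨V, Vinv, hVVinv, hVinvV⟩, rfl⟩
  have hVinv_eq : V⁻¹ = Vinv := Matrix.inv_eq_left_inv hVinvV
  set d1 : Fin n → ℂ := fun i => ((Real.arccos (hH.eigenvalues i) : ℝ) : ℂ) * Complex.I with hd1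
  set d2 : Fin n → ℂ := fun i => -(((Real.arccos (hH.eigenvalues i) : ℝ) : ℂ) * Complex.I)
    with hd2
  have harg : Complex.I • Matrix.fromBlocks 0 ((-Complex.I) • C) (Complex.I • C) 0
      = V * diagonal (Sum.elim d1 d2) * Vinv := by
    rw [← Matrix.fromBlocks_diagonal, hVdef, hVinvdef, aux_conj14, Matrix.fromBlocks_smul]
    rw [Matrix.fromBlocks_inj]
    refine ⟨?_, ?_, ?_, ?_⟩
    · rw [smul_zero, diag_comb14 U _ d1 d2 (fun _ => (0:ℂ)) (fun i => by simp [hd1, hd2])]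
      simp
    · rw [diag_comb14' U _ d1 d2 (fun i => ((Real.arccos (hH.eigenvalues i) : ℝ) : ℂ))
        (fun i => by
          simp only [hd1, hd2]
          linear_combination (-((Real.arccos (hH.eigenvalues i) : ℝ) : ℂ)) * Complex.I_sq)]
      rw [smul_smul, mul_neg, Complex.I_mul_I, neg_neg, one_smul, hC]
    · rw [diag_comb14' U _ d2 d1 (fun i => -((Real.arccos (hH.eigenvalues i) : ℝ) : ℂ))
        (fun i => by
          simp only [hd1, hd2]
          linear_combination (((Real.arccos (hH.eigenvalues i) : ℝ) : ℂ)) * Complex.I_sq)]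
      rw [smul_smul, Complex.I_mul_I, neg_one_smul, hC]
      rw [← Matrix.diagonal_neg, Matrix.mul_neg, Matrix.neg_mul]
    · rw [smul_zero, diag_comb14 U _ d1 d2 (fun _ => (0:ℂ)) (fun i => by simp [hd1, hd2])]
      simp
  rw [harg, ← hVinv_eq, Matrix.exp_conj V (diagonal (Sum.elim d1 d2)) hVunit,
    hVinv_eq, Matrix.exp_diagonal]
  have hexp_elim : NormedSpace.exp (Sum.elim d1 d2)
      = Sum.elim (fun i => Complex.exp (d1 i)) (fun i => Complex.exp (d2 i)) := by
    funext j
    cases j with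
    | inl i => rw [Pi.coe_exp, Sum.elim_inl, Sum.elim_inl, Complex.exp_eq_exp_ℂ]
    | inr i => rw [Pi.coe_exp, Sum.elim_inr, Sum.elim_inr, Complex.exp_eq_exp_ℂ]
  rw [hexp_elim, ← Matrix.fromBlocks_diagonal, hVdef, hVinvdef, aux_conj14,
    Matrix.fromBlocks_multiply]
  simp only [Matrix.one_mul, Matrix.zero_mul, Matrix.neg_mul, add_zero, zero_add]
  rw [Matrix.fromBlocks_inj]
  refine ⟨?_, ?_, ?_, ?_⟩
  · rw [diag_comb14 U _ _ _ (fun i => (hH.eigenvalues i : ℂ))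
      (fun i => by simpa [hd1, hd2, hcosθ i] using scalar_cos14 (Real.arccos (hH.eigenvalues i)))]
    exact hspec
  · rw [diag_comb14' U _ _ _
      (fun i => ((Real.sin (Real.arccos (hH.eigenvalues i)) : ℝ) : ℂ))
      (fun i => by simpa [hd1, hd2] using scalar_sin14 (Real.arccos (hH.eigenvalues i)))]
    exact hSeq
  · rw [diag_comb14' U _ _ _
      (fun i => -((Real.sin (Real.arccos (hH.eigenvalues i)) : ℝ) : ℂ))
      (fun i => by simpa [hd1, hd2] using scalar_sin14' (Real.arccos (hH.eigenvalues i)))]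
    rw [← Matrix.diagonal_neg, Matrix.mul_neg, Matrix.neg_mul, neg_neg]
    exact hSeq
  · rw [diag_comb14 U _ _ _ (fun i => (hH.eigenvalues i : ℂ))
      (fun i => by simpa [hd1, hd2, hcosθ i] using scalar_cos14 (Real.arccos (hH.eigenvalues i)))]
    rw [← hspec]
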